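/- Let ξ ∈ ℂ with Im(ξ) > 0, C ∈ ℂ, and define X⁺ := (1/(4Im(ξ)² + |C|²))·[[0, 4Im(ξ)²C],[0, 2i·Im(ξ)|C|²]] and Z⁺ := σ₂(X⁺)*σ₂. Then the rational matrix function R(z) := I + X⁺/(z-ξ) + Z⁺/(z-ξ*) satisfies: R(z)(I - p(z)N⁺) is analytic at z = ξ for any function p analytic near ξ except a simple pole at ξ with residue C, where N⁺ = [[0,1],[0,0]]. -/

import Mathlib

open scoped Topology

set_option maxHeartbeats 2000000 in
/-- With `X⁺` and `Z⁺ = σ₂ (X⁺)* σ₂` as defined, the rational matrix function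
`R(z) = I + X⁺/(z-ξ) + Z⁺/(z-ξ*)` has the property that `R(z)(I - p(z)N⁺)` is
analytic at `z = ξ` for any function `p` analytic near `ξ` except for a simple
pole at `ξ` with residue `C`. -/
theorem stmt16 (ξ C : ℂ) (hξ : 0 < ξ.im) (p : ℂ → ℂ)
    (hp : ∃ q : ℂ → ℂ, AnalyticAt ℂ q ξ ∧
        ∀ᶠ z in 𝓝[≠] ξ, p z = C / (z - ξ) + q z) :
    let Nplus : Matrix (Fin 2) (Fin 2) ℂ := !![0, 1; 0, 0]
    let σ₂ : Matrix (Fin 2) (Fin 2) ℂ := !![0, -Complex.I; Complex.I, 0]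
    let Xp : Matrix (Fin 2) (Fin 2) ℂ :=
      (1 / (4 * (ξ.im : ℂ) ^ 2 + (‖C‖ : ℂ) ^ 2)) •
        !![0, 4 * (ξ.im : ℂ) ^ 2 * C;
           0, 2 * Complex.I * (ξ.im : ℂ) * (‖C‖ : ℂ) ^ 2]
    let Zp : Matrix (Fin 2) (Fin 2) ℂ := σ₂ * Xp.map (starRingEnd ℂ) * σ₂
    let R : ℂ → Matrix (Fin 2) (Fin 2) ℂ := fun z =>
      1 + (z - ξ)⁻¹ • Xp + (z - (starRingEnd ℂ) ξ)⁻¹ • Zp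
    ∃ G : ℂ → Matrix (Fin 2) (Fin 2) ℂ,
      (∀ i j, AnalyticAt ℂ (fun z => G z i j) ξ) ∧
      ∀ᶠ z in 𝓝[≠] ξ, R z * (1 - p z • Nplus) = G z := by
  intro Nplus σ₂ Xp Zp R
  obtain ⟨q, hq, hpq⟩ := hp
  have hξw : ξ ≠ (starRingEnd ℂ) ξ := by
    intro h
    have h2 : ξ.im = -ξ.im := by
      conv_lhs => rw [h]
      exact Complex.conj_im ξ
    linarith
  have hconj : (starRingEnd ℂ) ξ = ξ - 2 * (ξ.im : ℂ) * Complex.I := by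
    have h3 := Complex.sub_conj ξ
    push_cast at h3
    linear_combination -h3
  refine ⟨fun z => (1 : Matrix (Fin 2) (Fin 2) ℂ)
      + (z - (starRingEnd ℂ) ξ)⁻¹ • Zp
      + (-(q z)) • Nplus
      + (-(q z) * (z - (starRingEnd ℂ) ξ)⁻¹
          + C * (z - (starRingEnd ℂ) ξ)⁻¹ * (2 * Complex.I * (ξ.im : ℂ))⁻¹) • (Zp * Nplus),
    ?_, ?_⟩
  · intro i j
    have h1 : AnalyticAt ℂ (fun z : ℂ => (z - (starRingEnd ℂ) ξ)⁻¹) ξ :=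
      (analyticAt_id.sub analyticAt_const).inv (sub_ne_zero.mpr hξw)
    simp only [Matrix.add_apply, Matrix.smul_apply, smul_eq_mul]
    exact ((analyticAt_const.add (h1.mul analyticAt_const)).add
        ((hq.neg).mul analyticAt_const)).add
      ((((hq.neg).mul h1).add ((analyticAt_const.mul h1).mul analyticAt_const)).mul
        analyticAt_const)
  · have h2 : ∀ᶠ z in 𝓝[≠] ξ, z ≠ (starRingEnd ℂ) ξ := by
      filter_upwards [eventually_nhdsWithin_of_eventually_nhds
        (eventually_ne_nhds hξw)] with z hz using hz
    filter_upwards [hpq, h2, eventually_mem_nhdsWithin] with z hpz hzw hz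
    have hz' : z ≠ ξ := hz
    have hzξ : z - ξ ≠ 0 := sub_ne_zero.mpr hz'
    have hzw' : z - (ξ - 2 * (ξ.im : ℂ) * Complex.I) ≠ 0 := by
      rw [← hconj]; exact sub_ne_zero.mpr hzw
    have hb : (ξ.im : ℂ) ≠ 0 := by exact_mod_cast (ne_of_gt hξ)
    have hC : ((‖C‖ : ℂ)) ^ 2 = C * (starRingEnd ℂ) C := by
      rw [Complex.mul_conj, ← Complex.sq_norm]
      push_cast
      ring
    have hden : (4 * (ξ.im : ℂ) ^ 2 + C * (starRingEnd ℂ) C) ≠ 0 := by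
      rw [← hC]
      have hpos : (0 : ℝ) < 4 * ξ.im ^ 2 + ‖C‖ ^ 2 := by positivity
      have h' : ((4 * ξ.im ^ 2 + ‖C‖ ^ 2 : ℝ) : ℂ) ≠ 0 :=
        Complex.ofReal_ne_zero.mpr (ne_of_gt hpos)
      push_cast at h'
      exact h'
    have hden2 : (4 * (ξ.im:ℂ)^2 + (starRingEnd ℂ) C * C) ≠ 0 := fun h => hden (by linear_combination h)
    have h2I : (2:ℂ) * Complex.I * (ξ.im:ℂ) ≠ 0 := by
      simp [hb, Complex.I_ne_zero]
    have hI3 : Complex.I ^ 3 = -Complex.I := by rw [pow_succ, Complex.I_sq]; ring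
    have hI4 : Complex.I ^ 4 = 1 := by rw [pow_succ, hI3]; simp
    have hI5 : Complex.I ^ 5 = Complex.I := by rw [pow_succ, hI4]; ring
    have hI6 : Complex.I ^ 6 = -1 := by rw [pow_succ, hI5, Complex.I_mul_I]
    have hI7 : Complex.I ^ 7 = -Complex.I := by rw [pow_succ, hI6]; ring
    have hI8 : Complex.I ^ 8 = 1 := by rw [pow_succ, hI7]; simp
    have hzw'' : (ξ.im:ℂ) * Complex.I * 2 + z - ξ ≠ 0 := by
      rw [show (ξ.im:ℂ) * Complex.I * 2 + z - ξ = z - (ξ - 2 * (ξ.im : ℂ) * Complex.I) by ring]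
      exact hzw'
    ext i j
    fin_cases i <;> fin_cases j <;>
      (simp only [R, Nplus, Zp, Xp, σ₂, Matrix.mul_apply, Fin.sum_univ_two,
        Matrix.add_apply, Matrix.sub_apply, Matrix.smul_apply, Matrix.one_apply,
        Matrix.map_apply, Matrix.of_apply, Matrix.cons_val', Matrix.cons_val_zero,
        Matrix.cons_val_one, Matrix.head_cons, Matrix.head_fin_const, Matrix.empty_val',
        Matrix.cons_val_fin_one, smul_eq_mul, map_mul, map_ofNat, Complex.conj_I,
        Complex.conj_ofReal, map_one, map_zero, map_pow, zero_ne_one, map_div₀,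
        map_add, map_sub, map_inv₀, one_div,
        if_true, if_false, Fin.isValue, Fin.zero_eta, Fin.mk_one, hC, Complex.conj_conj, one_ne_zero]
       try rw [hpz]
       try simp only [hconj]
       try field_simp
       try ring_nf
       try simp only [Complex.I_sq, hI3, hI4, hI5, hI6, hI7, hI8]
       try ring_nf
       try simp only [Complex.I_sq, hI3, hI4, hI5, hI6, hI7, hI8]
       try ring
       try field_simp
       try ring_nf
       try simp only [Complex.I_sq, hI3, hI4, hI5, hI6, hI7, hI8]
       try ring)
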